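/- Let r < 1 < R and r' < 1 < R', let f be holomorphic on the annulus A_{r,R} with f(A_{r,R}) ⊆ A_{r',R'}, and assume the loop x ↦ f(e^{ix}) has winding number one around the origin, i.e. (1/(2πi)) ∫₀^{2π} (f'(e^{ix}) · i e^{ix} / f(e^{ix})) dx = 1. Then for all holomorphic functions ψ₁, ψ₂ on A_{r',R'}: ∫₀^{2π} ψ₁(f(e^{ix})) · ψ₂'(f(e^{ix})) · f'(e^{ix}) · i e^{ix} dx = ∫₀^{2π} ψ₁(e^{ix}) · ψ₂'(e^{ix}) · i e^{ix} dx. (This expresses that the symplectic form ω on holomorphic functions, given by the contour integral of (δφ) ∂_z(δφ) dz over a curve generating π₁ of the annulus, is preserved under pullback by f.) -/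

import Mathlib

open Complex intervalIntegral Set

noncomputable section

/-- The open annulus `A_{r,R} = {z : r < |z| < R}`. -/
def annulus (r R : ℝ) : Set ℂ := {z : ℂ | r < ‖z‖ ∧ ‖z‖ < R}

lemma exists_primitive {U : Set ℂ} (hU : IsOpen U) {φ : ℂ → ℂ}
    (hφ : DifferentiableOn ℂ φ U)
    (hrect : ∀ w ∈ U, Set.uIcc 0 w.re ×ℂ Set.uIcc 0 w.im ⊆ U) :
    ∃ F : ℂ → ℂ, ∀ u ∈ U, HasDerivAt F (φ u) u := by
  have hc : ContinuousOn φ U := hφ.continuousOn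
  set F₁ : ℂ → ℂ := fun w => (∫ t in (0:ℝ)..w.re, φ t) +
      I • ∫ s in (0:ℝ)..w.im, φ (w.re + s*I) with hF₁def
  set F₂ : ℂ → ℂ := fun w => (I • ∫ s in (0:ℝ)..w.im, φ (s*I)) +
      ∫ t in (0:ℝ)..w.re, φ (t + w.im*I) with hF₂def
  have memrect : ∀ w ∈ U, ∀ x y : ℝ, x ∈ Set.uIcc 0 w.re → y ∈ Set.uIcc 0 w.im →
      (x + y*I : ℂ) ∈ U := by
    intro w hw x y hx hy
    apply hrect w hw
    rw [Complex.mem_reProdIm]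
    constructor <;> simp [hx, hy]
  have hF12 : ∀ w ∈ U, F₁ w = F₂ w := by
    intro w hw
    have h := Complex.integral_boundary_rect_eq_zero_of_differentiableOn φ 0 w
      (hφ.mono (by simpa using hrect w hw))
    simp only [Complex.zero_re, Complex.zero_im, Complex.ofReal_zero, zero_mul,
      add_zero, zero_add] at h
    simp only [hF₁def, hF₂def]
    linear_combination h
  refine ⟨F₁, fun u hu => ?_⟩
  rw [hasDerivAt_iff_isLittleO, Asymptotics.isLittleO_iff]
  intro ε hε
  have hcu : ContinuousAt φ u :=
    (hφ.differentiableAt (hU.mem_nhds hu)).continuousAt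
  obtain ⟨δ₀, hδ₀, hball⟩ := Metric.continuousAt_iff.1 hcu (ε/2) (by positivity)
  obtain ⟨δ₁, hδ₁, hsub⟩ := Metric.isOpen_iff.1 hU u hu
  set δ := min δ₀ δ₁ with hδdef
  have hδ : 0 < δ := lt_min hδ₀ hδ₁
  have hballU : Metric.ball u δ ⊆ U := fun v hv =>
    hsub (Metric.ball_subset_ball (min_le_right _ _) hv)
  have hballφ : ∀ v ∈ Metric.ball u δ, ‖φ v - φ u‖ ≤ ε/2 := by
    intro v hv
    rw [← dist_eq_norm]; exact le_of_lt (hball (Metric.ball_subset_ball (min_le_left _ _) hv))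
  filter_upwards [Metric.ball_mem_nhds u (half_pos hδ)] with w hw
  have hwu : ‖w - u‖ < δ/2 := by
    simpa [Complex.dist_eq] using hw
  have hre : |w.re - u.re| ≤ ‖w - u‖ := by
    simpa using Complex.abs_re_le_norm (w - u)
  have him : |w.im - u.im| ≤ ‖w - u‖ := by
    simpa using Complex.abs_im_le_norm (w - u)
  set m : ℂ := (w.re : ℝ) + (u.im : ℝ)*I with hmdef
  have hmre : m.re = w.re := by simp [hmdef]
  have hmim : m.im = u.im := by simp [hmdef]
  have hmu : ‖m - u‖ < δ/2 := by
    have h1 : m - u = ((w.re - u.re : ℝ) : ℂ) := by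
      apply Complex.ext <;> simp [hmdef]
    rw [h1, Complex.norm_real, Real.norm_eq_abs]
    exact lt_of_le_of_lt hre hwu
  have hmU : m ∈ U := hballU (by rw [Metric.mem_ball, Complex.dist_eq]; linarith)
  have hwU : w ∈ U := hballU (by rw [Metric.mem_ball, Complex.dist_eq]; linarith)
  have hsubball : ∀ x y : ℝ, x ∈ Set.uIcc u.re w.re → y ∈ Set.uIcc u.im w.im →
      (x + y*I : ℂ) ∈ Metric.ball u δ := by
    intro x y hx hy
    rw [Metric.mem_ball, Complex.dist_eq]
    have h1 : |x - u.re| ≤ |w.re - u.re| := abs_sub_left_of_mem_uIcc hx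
    have h2 : |y - u.im| ≤ |w.im - u.im| := abs_sub_left_of_mem_uIcc hy
    have h3 : (↑x + ↑y*I - u : ℂ) = ((x - u.re : ℝ) : ℂ) + ((y - u.im : ℝ) : ℂ) * I := by
      apply Complex.ext <;> simp
    have h4 : ‖↑x + ↑y*I - u‖ ≤ |x - u.re| + |y - u.im| := by
      rw [h3]
      refine le_trans (norm_add_le _ _) ?_
      rw [Complex.norm_real, Real.norm_eq_abs, norm_mul, Complex.norm_I, Complex.norm_real, Real.norm_eq_abs, mul_one]
    linarith
  -- integrability facts
  have hcont : ∀ (a b : ℝ) (g : ℝ → ℂ), Continuous g → (∀ s ∈ Set.uIcc a b, g s ∈ U) →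
      IntervalIntegrable (fun s => φ (g s)) MeasureTheory.volume a b := by
    intro a b g hg hmem
    apply ContinuousOn.intervalIntegrable
    exact hc.comp hg.continuousOn hmem
  have hI1 : IntervalIntegrable (fun s : ℝ => φ (↑w.re + ↑s*I)) MeasureTheory.volume 0 w.im :=
    hcont _ _ _ (by fun_prop) (fun s hs => memrect w hwU w.re s right_mem_uIcc hs)
  have hI2 : IntervalIntegrable (fun s : ℝ => φ (↑w.re + ↑s*I)) MeasureTheory.volume 0 u.im :=
    hcont _ _ _ (by fun_prop) (fun s hs => by
      have := memrect m hmU w.re s (by rw [hmre]; exact right_mem_uIcc) (by rwa [hmim])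
      simpa using this)
  have hI3 : IntervalIntegrable (fun t : ℝ => φ (↑t + ↑u.im*I)) MeasureTheory.volume 0 w.re :=
    hcont _ _ _ (by fun_prop) (fun t ht => by
      have := memrect m hmU t u.im (by rwa [hmre]) (by rw [hmim]; exact right_mem_uIcc)
      simpa using this)
  have hI4 : IntervalIntegrable (fun t : ℝ => φ (↑t + ↑u.im*I)) MeasureTheory.volume 0 u.re :=
    hcont _ _ _ (by fun_prop) (fun t ht => by
      have := memrect u hu t u.im ht right_mem_uIcc
      simpa [Complex.re_add_im] using this)
  have hI5 : IntervalIntegrable (fun s : ℝ => φ (↑w.re + ↑s*I)) MeasureTheory.volume u.im w.im :=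
    hcont _ _ _ (by fun_prop) (fun s hs =>
      hballU (hsubball w.re s right_mem_uIcc hs))
  have hI6 : IntervalIntegrable (fun t : ℝ => φ (↑t + ↑u.im*I)) MeasureTheory.volume u.re w.re :=
    hcont _ _ _ (by fun_prop) (fun t ht =>
      hballU (hsubball t u.im ht left_mem_uIcc))
  have key : F₁ w - F₁ u = (∫ t in u.re..w.re, φ (↑t + ↑u.im*I)) +
      I • ∫ s in u.im..w.im, φ (↑w.re + ↑s*I) := by
    have e1 : F₁ w - F₁ m = I • ∫ s in u.im..w.im, φ (↑w.re + ↑s*I) := by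
      simp only [hF₁def, hmre, hmim]
      rw [← intervalIntegral.integral_interval_sub_left hI1 hI2, smul_sub]
      ring
    have e2 : F₂ m - F₂ u = ∫ t in u.re..w.re, φ (↑t + ↑u.im*I) := by
      simp only [hF₂def, hmre, hmim]
      rw [← intervalIntegral.integral_interval_sub_left hI3 hI4]
      ring
    linear_combination e1 + e2 + hF12 m hmU - hF12 u hu
  have hwu_eq : (w - u : ℂ) = (↑(w.re - u.re) + ↑(w.im - u.im) * I) := by
    apply Complex.ext <;> simp
  have key2 : F₁ w - F₁ u - (w - u) • φ u
      = (∫ t in u.re..w.re, (φ (↑t + ↑u.im*I) - φ u)) +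
        I • ∫ s in u.im..w.im, (φ (↑w.re + ↑s*I) - φ u) := by
    rw [intervalIntegral.integral_sub hI6 intervalIntegrable_const,
      intervalIntegral.integral_sub hI5 intervalIntegrable_const,
      intervalIntegral.integral_const, intervalIntegral.integral_const, key, hwu_eq]
    simp only [smul_eq_mul, Complex.real_smul, smul_sub]
    push_cast
    ring
  rw [key2]
  have b1 : ‖∫ t in u.re..w.re, (φ (↑t + ↑u.im*I) - φ u)‖ ≤ ε/2 * |w.re - u.re| := by
    apply intervalIntegral.norm_integral_le_of_norm_le_const
    intro t ht
    exact hballφ _ (hsubball t u.im (uIoc_subset_uIcc ht) left_mem_uIcc)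
  have b2 : ‖∫ s in u.im..w.im, (φ (↑w.re + ↑s*I) - φ u)‖ ≤ ε/2 * |w.im - u.im| := by
    apply intervalIntegral.norm_integral_le_of_norm_le_const
    intro s hs
    exact hballφ _ (hsubball w.re s right_mem_uIcc (uIoc_subset_uIcc hs))
  have hnorm : ‖(w : ℂ) - u‖ = ‖w - u‖ := rfl
  calc ‖(∫ t in u.re..w.re, (φ (↑t + ↑u.im*I) - φ u)) +
        I • ∫ s in u.im..w.im, (φ (↑w.re + ↑s*I) - φ u)‖
      ≤ ‖∫ t in u.re..w.re, (φ (↑t + ↑u.im*I) - φ u)‖ +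
        ‖I • ∫ s in u.im..w.im, (φ (↑w.re + ↑s*I) - φ u)‖ := norm_add_le _ _
    _ = ‖∫ t in u.re..w.re, (φ (↑t + ↑u.im*I) - φ u)‖ +
        ‖∫ s in u.im..w.im, (φ (↑w.re + ↑s*I) - φ u)‖ := by
        rw [norm_smul]; simp
    _ ≤ ε/2 * |w.re - u.re| + ε/2 * |w.im - u.im| := add_le_add b1 b2
    _ ≤ ε * ‖w - u‖ := by
        rw [hnorm]
        nlinarith [norm_nonneg (w - u)]

lemma const_of_hasDerivAt_zero {g : ℝ → ℂ} (h : ∀ x, HasDerivAt g 0 x) (a b : ℝ) :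
    g a = g b :=
  is_const_of_deriv_eq_zero (fun x => (h x).differentiableAt) (fun x => (h x).deriv) a b

lemma hasDerivAt_comp_real {g : ℂ → ℂ} {g' : ℂ} {γ : ℝ → ℂ} {γ' : ℂ} {x : ℝ}
    (hg : HasDerivAt g g' (γ x)) (hγ : HasDerivAt γ γ' x) :
    HasDerivAt (fun t => g (γ t)) (γ' * g') x := by
  have h := hg.scomp x hγ
  simp only [smul_eq_mul] at h
  exact h

lemma hasDerivAt_mulI (x : ℝ) : HasDerivAt (fun x : ℝ => (x : ℂ) * I) I x := by
  simpa using ((Complex.ofRealCLM.hasDerivAt (x := x)).mul_const I)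

lemma hasDerivAt_expI (x : ℝ) :
    HasDerivAt (fun x : ℝ => Complex.exp (x * I)) (I * Complex.exp (x * I)) x :=
  hasDerivAt_comp_real (Complex.hasDerivAt_exp _) (hasDerivAt_mulI x)

lemma convex_combo_bounds {a b x y : ℝ} (ha : 0 ≤ a) (hb : 0 ≤ b) (hab : a + b = 1) :
    min x y ≤ a * x + b * y ∧ a * x + b * y ≤ max x y := by
  constructor
  · rcases le_total x y with h | h
    · rw [min_eq_left h]
      have h1 : b * x ≤ b * y := mul_le_mul_of_nonneg_left h hb
      have h2 : a * x + b * x = x := by rw [← add_mul, hab, one_mul]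
      linarith
    · rw [min_eq_right h]
      have h1 : a * y ≤ a * x := mul_le_mul_of_nonneg_left h ha
      have h2 : a * y + b * y = y := by rw [← add_mul, hab, one_mul]
      linarith
  · rcases le_total x y with h | h
    · rw [max_eq_right h]
      have h1 : a * x ≤ a * y := mul_le_mul_of_nonneg_left h ha
      have h2 : a * y + b * y = y := by rw [← add_mul, hab, one_mul]
      linarith
    · rw [max_eq_left h]
      have h1 : b * y ≤ b * x := mul_le_mul_of_nonneg_left h hb
      have h2 : a * x + b * x = x := by rw [← add_mul, hab, one_mul]
      linarith

lemma periodic_primitive_diff {S : Set ℂ} (hSo : IsOpen S) (hSc : Convex ℝ S)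
    {φ H : ℂ → ℂ} (hH : ∀ u ∈ S, HasDerivAt H (φ u) u) {p : ℂ}
    (hSp : ∀ u ∈ S, u + p ∈ S) (hφp : ∀ u, φ (u + p) = φ u)
    {u v : ℂ} (hu : u ∈ S) (hv : v ∈ S) :
    H (u + p) - H u = H (v + p) - H v := by
  have hD : ∀ z ∈ S, HasDerivAt (fun w => H (w + p) - H w) 0 z := by
    intro z hz
    have h1 : HasDerivAt (fun w : ℂ => H (w + p)) (φ (z + p)) z := by
      have h2 := HasDerivAt.comp z (hH _ (hSp z hz)) ((hasDerivAt_id z).add_const p)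
      rw [mul_one] at h2
      exact h2
    have h3 := h1.sub (hH z hz)
    rw [hφp z, sub_self] at h3
    exact h3
  exact hSc.is_const_of_fderivWithin_eq_zero (𝕜 := ℂ)
    (fun z hz => ((hD z hz).differentiableAt).differentiableWithinAt)
    (fun z hz => by
      rw [fderivWithin_of_isOpen hSo hz, (hD z hz).hasFDerivAt.fderiv]
      ext w
      simp) hu hv

lemma isOpen_annulus (a b : ℝ) : IsOpen (annulus a b) :=
  IsOpen.preimage continuous_norm isOpen_Ioo

set_option maxHeartbeats 1000000 in
theorem symplectic_form_preserved (r R r' R' : ℝ)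
    (hr : r < 1) (hR : 1 < R) (hr' : r' < 1) (hR' : 1 < R')
    (f : ℂ → ℂ) (hf : DifferentiableOn ℂ f (annulus r R))
    (hmaps : ∀ z ∈ annulus r R, f z ∈ annulus r' R')
    (hwind : (1 / (2 * (Real.pi : ℂ) * Complex.I)) *
        (∫ x in (0:ℝ)..(2 * Real.pi),
          deriv f (Complex.exp (x * Complex.I)) * (Complex.I * Complex.exp (x * Complex.I)) /
            f (Complex.exp (x * Complex.I))) = 1) :
    ∀ ψ₁ ψ₂ : ℂ → ℂ, DifferentiableOn ℂ ψ₁ (annulus r' R') →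
      DifferentiableOn ℂ ψ₂ (annulus r' R') →
      (∫ x in (0:ℝ)..(2 * Real.pi),
          ψ₁ (f (Complex.exp (x * Complex.I))) *
            deriv ψ₂ (f (Complex.exp (x * Complex.I))) *
            deriv f (Complex.exp (x * Complex.I)) * (Complex.I * Complex.exp (x * Complex.I)))
      = ∫ x in (0:ℝ)..(2 * Real.pi),
          ψ₁ (Complex.exp (x * Complex.I)) * deriv ψ₂ (Complex.exp (x * Complex.I)) *
            (Complex.I * Complex.exp (x * Complex.I)) := by
  intro ψ₁ ψ₂ hψ₁ hψ₂
  have hopen : IsOpen (annulus r R) := isOpen_annulus r R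
  have hopen' : IsOpen (annulus r' R') := isOpen_annulus r' R'
  set g : ℂ → ℂ := fun z => ψ₁ z * deriv ψ₂ z with hgdef
  have hg : DifferentiableOn ℂ g (annulus r' R') :=
    hψ₁.mul ((hψ₂.analyticOnNhd hopen').deriv.differentiableOn)
  have hgc : ContinuousOn g (annulus r' R') := hg.continuousOn
  have hmem1 : ∀ x : ℝ, Complex.exp (x * I) ∈ annulus r R := by
    intro x
    constructor <;> simp [Complex.norm_exp] <;> assumption
  have hmemA : ∀ x : ℝ, Complex.exp (x * I) ∈ annulus r' R' := by
    intro x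
    constructor <;> simp [Complex.norm_exp] <;> assumption
  set γ : ℝ → ℂ := fun x => f (Complex.exp (x * I)) with hγdef
  set γ' : ℝ → ℂ := fun x => deriv f (Complex.exp (x * I)) * (I * Complex.exp (x * I)) with hγ'def
  have hγd : ∀ x, HasDerivAt γ (γ' x) x := by
    intro x
    have h1 := (hf.differentiableAt (hopen.mem_nhds (hmem1 x))).hasDerivAt
    have h2 := hasDerivAt_comp_real h1 (hasDerivAt_expI x)
    simp only [hγdef, hγ'def]
    convert h2 using 1
    ring
  have hec : Continuous fun x : ℝ => Complex.exp (x * I) := by fun_prop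
  have hγc : Continuous γ := hf.continuousOn.comp_continuous hec hmem1
  have hγ'c : Continuous γ' :=
    (((hf.analyticOnNhd hopen).deriv.continuousOn).comp_continuous hec hmem1).mul
      (continuous_const.mul hec)
  have hγmem : ∀ x, γ x ∈ annulus r' R' := fun x => hmaps _ (hmem1 x)
  have h2πne : (2 * (Real.pi : ℂ) * I) ≠ 0 := by
    simp [Real.pi_ne_zero, Complex.I_ne_zero, Complex.ofReal_ne_zero]
  have hexpper : Complex.exp (((2 * Real.pi : ℝ) : ℂ) * I) = Complex.exp (((0:ℝ):ℂ) * I) := by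
    push_cast
    rw [Complex.exp_two_pi_mul_I]
    simp
  have hγper : γ (2 * Real.pi) = γ 0 := by
    simp only [hγdef, hexpper]
  -- rewrite both sides as integrals of `g ∘ curve * curve'`
  have eL : (∫ x in (0:ℝ)..(2 * Real.pi),
        ψ₁ (f (Complex.exp (x * I))) * deriv ψ₂ (f (Complex.exp (x * I))) *
          deriv f (Complex.exp (x * I)) * (I * Complex.exp (x * I)))
      = ∫ x in (0:ℝ)..(2 * Real.pi), g (γ x) * γ' x := by
    apply intervalIntegral.integral_congr
    intro x _
    simp only [hgdef, hγdef, hγ'def]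
    ring
  have eR : (∫ x in (0:ℝ)..(2 * Real.pi),
        ψ₁ (Complex.exp (x * I)) * deriv ψ₂ (Complex.exp (x * I)) * (I * Complex.exp (x * I)))
      = ∫ x in (0:ℝ)..(2 * Real.pi), g (Complex.exp (x * I)) * (I * Complex.exp (x * I)) := by
    apply intervalIntegral.integral_congr
    intro x _
    simp only [hgdef]
  rw [eL, eR]
  rcases lt_or_ge r' 0 with hneg | hpos
  · -- the target region is a disc; both integrals vanish
    have hrect' : ∀ w ∈ annulus r' R', Set.uIcc 0 w.re ×ℂ Set.uIcc 0 w.im ⊆ annulus r' R' := by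
      intro w hw z hz
      rw [Complex.mem_reProdIm] at hz
      have h1 : |z.re| ≤ |w.re| := by simpa using abs_sub_left_of_mem_uIcc hz.1
      have h2 : |z.im| ≤ |w.im| := by simpa using abs_sub_left_of_mem_uIcc hz.2
      constructor
      · exact lt_of_lt_of_le hneg (norm_nonneg z)
      · have hsq : ‖z‖ ^ 2 ≤ ‖w‖ ^ 2 := by
          rw [Complex.sq_norm, Complex.sq_norm, Complex.normSq_apply, Complex.normSq_apply]
          nlinarith [_root_.sq_abs z.re, _root_.sq_abs w.re, _root_.sq_abs z.im, _root_.sq_abs w.im, abs_nonneg z.re,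
            abs_nonneg w.re, abs_nonneg z.im, abs_nonneg w.im]
        nlinarith [norm_nonneg z, norm_nonneg w, hw.2]
    obtain ⟨G, hG⟩ := exists_primitive hopen' hg hrect'
    have hkey : ∀ (c : ℝ → ℂ) (c' : ℝ → ℂ), (∀ x, HasDerivAt c (c' x) x) →
        (∀ x, c x ∈ annulus r' R') → Continuous c' → Continuous c →
        c (2 * Real.pi) = c 0 →
        (∫ x in (0:ℝ)..(2 * Real.pi), g (c x) * c' x) = 0 := by
      intro c c' hd hmem hc' hc hper
      have h : (∫ x in (0:ℝ)..(2 * Real.pi), g (c x) * c' x) = G (c (2 * Real.pi)) - G (c 0) := by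
        refine intervalIntegral.integral_eq_sub_of_hasDerivAt (f := fun x => G (c x)) ?_ ?_
        · intro x _
          have := hasDerivAt_comp_real (hG _ (hmem x)) (hd x)
          exact this.congr_deriv (by ring)
        · exact ((hgc.comp_continuous hc hmem).mul hc').intervalIntegrable _ _
      rw [h, hper, sub_self]
    rw [hkey γ γ' hγd hγmem hγ'c hγc hγper,
      hkey (fun x => Complex.exp (x * I)) (fun x => I * Complex.exp (x * I))
        hasDerivAt_expI hmemA (continuous_const.mul hec) hec hexpper]
  ·
    -- main case: `0 ≤ r'`
    have hfne : ∀ x, γ x ≠ 0 := by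
      intro x h0
      have h1 := (hγmem x).1
      rw [h0] at h1
      simp only [norm_zero] at h1
      linarith
    have hanne : ∀ z ∈ annulus r' R', z ≠ 0 := by
      intro z hz h0
      have h1 := hz.1
      rw [h0] at h1
      simp only [norm_zero] at h1
      linarith
    have hqc : Continuous fun x => γ' x / γ x := hγ'c.div hγc hfne
    have hwind' : (∫ x in (0:ℝ)..(2 * Real.pi), γ' x / γ x) = 2 * (Real.pi:ℂ) * I := by
      have heq : (∫ x in (0:ℝ)..(2 * Real.pi), γ' x / γ x)
          = ∫ x in (0:ℝ)..(2 * Real.pi),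
              deriv f (Complex.exp (x * I)) * (I * Complex.exp (x * I)) / f (Complex.exp (x * I)) := by
        apply intervalIntegral.integral_congr
        intro x _
        simp only [hγdef, hγ'def]
      rw [heq]
      have h3 := congrArg (fun z => (2 * (Real.pi:ℂ) * I) * z) hwind
      rw [mul_one, ← mul_assoc, mul_one_div, div_self h2πne, one_mul] at h3
      exact h3
    set L : ℝ → ℂ := fun x => Complex.log (γ 0) + ∫ t in (0:ℝ)..x, γ' t / γ t with hLdef
    have hL' : ∀ x, HasDerivAt L (γ' x / γ x) x := by
      intro x
      apply HasDerivAt.const_add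
      exact intervalIntegral.integral_hasDerivAt_right (hqc.intervalIntegrable _ _)
        (hqc.stronglyMeasurableAtFilter _ _) hqc.continuousAt
    have hexpL : ∀ x, Complex.exp (L x) = γ x := by
      have hP : ∀ x, HasDerivAt (fun y => Complex.exp (-L y) * γ y) 0 x := by
        intro x
        have h1 : HasDerivAt (fun y => -L y) (-(γ' x / γ x)) x := (hL' x).neg
        have h2 : HasDerivAt (fun y => Complex.exp (-L y)) (-(γ' x / γ x) * Complex.exp (-L x)) x :=
          hasDerivAt_comp_real (γ := fun y => -L y) (Complex.hasDerivAt_exp (-L x)) h1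
        have h3 := h2.mul (hγd x)
        refine h3.congr_deriv (Eq.symm ?_)
        have h4 : γ' x / γ x * γ x = γ' x := div_mul_cancel₀ _ (hfne x)
        linear_combination Complex.exp (-L x) * h4
      have hc0 := const_of_hasDerivAt_zero hP
      intro x
      have h5 : Complex.exp (-L x) * γ x = Complex.exp (-L 0) * γ 0 := hc0 x 0
      have hL0 : L 0 = Complex.log (γ 0) := by simp [hLdef]
      rw [hL0] at h5
      rw [Complex.exp_neg (Complex.log (γ 0)), Complex.exp_log (hfne 0),
        inv_mul_cancel₀ (hfne 0)] at h5
      rw [Complex.exp_neg] at h5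
      exact (inv_mul_eq_one₀ (Complex.exp_ne_zero _)).mp h5
    set S : Set ℂ := Complex.exp ⁻¹' (annulus r' R') with hSdef
    have hSopen : IsOpen S := hopen'.preimage Complex.continuous_exp
    have hSmem : ∀ u : ℂ, u ∈ S ↔ (r' < Real.exp u.re ∧ Real.exp u.re < R') := by
      intro u
      simp [hSdef, annulus, Set.mem_preimage, Complex.norm_exp]
    have hrectS : ∀ w ∈ S, Set.uIcc 0 w.re ×ℂ Set.uIcc 0 w.im ⊆ S := by
      intro w hw z hz
      rw [Complex.mem_reProdIm] at hz
      rw [hSmem] at hw ⊢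
      have h1 := hz.1
      rw [Set.mem_uIcc] at h1
      constructor
      · rcases h1 with ⟨h0, _⟩ | ⟨hge, _⟩
        · calc r' < 1 := hr'
            _ = Real.exp 0 := Real.exp_zero.symm
            _ ≤ Real.exp z.re := Real.exp_le_exp.mpr h0
        · exact lt_of_lt_of_le hw.1 (Real.exp_le_exp.mpr hge)
      · rcases h1 with ⟨_, hle⟩ | ⟨_, h0⟩
        · exact lt_of_le_of_lt (Real.exp_le_exp.mpr hle) hw.2
        · calc Real.exp z.re ≤ Real.exp 0 := Real.exp_le_exp.mpr h0
            _ = 1 := Real.exp_zero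
            _ < R' := hR'
    have hSconv : Convex ℝ S := by
      intro u hu v hv a b ha hb hab
      rw [hSmem] at hu hv ⊢
      have hre : (a • u + b • v).re = a * u.re + b * v.re := by simp
      rw [hre]
      constructor
      · have hmin : min u.re v.re ≤ a * u.re + b * v.re :=
          (convex_combo_bounds ha hb hab).1
        have hm : r' < Real.exp (min u.re v.re) := by
          rcases le_total u.re v.re with h | h
          · rw [min_eq_left h]; exact hu.1
          · rw [min_eq_right h]; exact hv.1
        exact lt_of_lt_of_le hm (Real.exp_le_exp.mpr hmin)
      · have hmax : a * u.re + b * v.re ≤ max u.re v.re :=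
          (convex_combo_bounds ha hb hab).2
        have hm : Real.exp (max u.re v.re) < R' := by
          rcases le_total u.re v.re with h | h
          · rw [max_eq_right h]; exact hv.2
          · rw [max_eq_left h]; exact hu.2
        exact lt_of_le_of_lt (Real.exp_le_exp.mpr hmax) hm
    set c : ℂ := (∫ x in (0:ℝ)..(2 * Real.pi), g (Complex.exp (x * I)) * (I * Complex.exp (x * I)))
        / (2 * (Real.pi:ℂ) * I) with hcdef
    have hRHS : (∫ x in (0:ℝ)..(2 * Real.pi), g (Complex.exp (x * I)) * (I * Complex.exp (x * I)))
        = c * (2 * (Real.pi:ℂ) * I) := (div_mul_cancel₀ _ h2πne).symm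
    set h₀ : ℂ → ℂ := fun z => g z - c / z with hh₀def
    have hh₀diff : DifferentiableOn ℂ h₀ (annulus r' R') :=
      hg.sub ((differentiableOn_const c).div differentiableOn_id hanne)
    have hh₀c : ContinuousOn h₀ (annulus r' R') := hh₀diff.continuousOn
    set φ : ℂ → ℂ := fun u => h₀ (Complex.exp u) * Complex.exp u with hφdef
    have hφdiff : DifferentiableOn ℂ φ S :=
      (hh₀diff.comp Complex.differentiable_exp.differentiableOn (fun u hu => hu)).mul
        Complex.differentiable_exp.differentiableOn
    obtain ⟨H, hH⟩ := exists_primitive hSopen hφdiff hrectS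
    have hLS : ∀ x, L x ∈ S := by
      intro x
      show Complex.exp (L x) ∈ annulus r' R'
      rw [hexpL x]
      exact hγmem x
    have hSx : ∀ x : ℝ, ((x:ℂ) * I) ∈ S := fun x => hmemA x
    have hmain : (∫ x in (0:ℝ)..(2 * Real.pi), h₀ (γ x) * γ' x)
        = H (L (2 * Real.pi)) - H (L 0) := by
      refine intervalIntegral.integral_eq_sub_of_hasDerivAt (f := fun x => H (L x)) ?_ ?_
      · intro x _
        have h1 := hasDerivAt_comp_real (hH _ (hLS x)) (hL' x)
        refine h1.congr_deriv (Eq.symm ?_)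
        simp only [hφdef]
        rw [hexpL x]
        have h4 : γ' x / γ x * γ x = γ' x := div_mul_cancel₀ _ (hfne x)
        linear_combination h₀ (γ x) * h4.symm
      · exact ((hh₀c.comp_continuous hγc hγmem).mul hγ'c).intervalIntegrable _ _
    have hL2π : L (2 * Real.pi) = L 0 + 2 * (Real.pi:ℂ) * I := by
      simp only [hLdef, intervalIntegral.integral_same, add_zero]
      rw [hwind']
    have hper2 : ∀ u : ℂ, Complex.exp (u + 2 * (Real.pi:ℂ) * I) = Complex.exp u := by
      intro u
      rw [Complex.exp_add, Complex.exp_two_pi_mul_I, mul_one]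
    have hSper : ∀ u ∈ S, u + 2 * (Real.pi:ℂ) * I ∈ S := by
      intro u hu
      show Complex.exp _ ∈ annulus r' R'
      rw [hper2]
      exact hu
    have h0S : (0:ℂ) ∈ S := by
      show Complex.exp 0 ∈ annulus r' R'
      rw [Complex.exp_zero]
      constructor <;> simp <;> assumption
    have hDconst : H (L 0 + 2 * (Real.pi:ℂ) * I) - H (L 0)
        = H ((0:ℂ) + 2 * (Real.pi:ℂ) * I) - H 0 :=
      periodic_primitive_diff hSopen hSconv hH hSper
        (fun u => by simp only [hφdef]; rw [hper2 u]) (hLS 0) h0S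
    have hφcont : Continuous fun x : ℝ => φ ((x:ℂ) * I) :=
      (hφdiff.continuousOn).comp_continuous (by fun_prop) hSx
    have hftc : (∫ x in (0:ℝ)..(2 * Real.pi), I * φ ((x:ℂ) * I))
        = H (((2 * Real.pi:ℝ):ℂ) * I) - H (((0:ℝ):ℂ) * I) := by
      refine intervalIntegral.integral_eq_sub_of_hasDerivAt (f := fun x : ℝ => H ((x:ℂ) * I)) ?_ ?_
      · intro x _
        exact hasDerivAt_comp_real (hH _ (hSx x)) (hasDerivAt_mulI x)
      · exact (continuous_const.mul hφcont).intervalIntegrable _ _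
    have hsplit : (∫ x in (0:ℝ)..(2 * Real.pi), I * φ ((x:ℂ) * I))
        = (∫ x in (0:ℝ)..(2 * Real.pi), g (Complex.exp (x * I)) * (I * Complex.exp (x * I)))
          - ∫ _x in (0:ℝ)..(2 * Real.pi), (c * I) := by
      have hint_a : IntervalIntegrable
          (fun x : ℝ => g (Complex.exp (x * I)) * (I * Complex.exp (x * I)))
          MeasureTheory.volume 0 (2 * Real.pi) :=
        ((hgc.comp_continuous hec hmemA).mul (continuous_const.mul hec)).intervalIntegrable _ _
      rw [← intervalIntegral.integral_sub hint_a intervalIntegrable_const]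
      apply intervalIntegral.integral_congr
      intro x _
      simp only [hφdef, hh₀def]
      field_simp [Complex.exp_ne_zero]
    have hconstint : (∫ _x in (0:ℝ)..(2 * Real.pi), (c * I)) = c * (2 * (Real.pi:ℂ) * I) := by
      rw [intervalIntegral.integral_const, sub_zero, Complex.real_smul]
      push_cast
      ring
    have hD0 : H ((0:ℂ) + 2 * (Real.pi:ℂ) * I) - H 0 = 0 := by
      have e1 : ((2 * Real.pi:ℝ):ℂ) * I = 0 + 2 * (Real.pi:ℂ) * I := by
        push_cast
        ring
      have e2 : ((0:ℝ):ℂ) * I = 0 := by simp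
      have hD0' : H ((0:ℂ) + 2 * (Real.pi:ℂ) * I) - H 0
          = H (((2 * Real.pi:ℝ):ℂ) * I) - H (((0:ℝ):ℂ) * I) := by
        rw [e1, e2]
      rw [hD0', ← hftc, hsplit, hconstint, hRHS, sub_self]
    have hmain0 : (∫ x in (0:ℝ)..(2 * Real.pi), h₀ (γ x) * γ' x) = 0 := by
      rw [hmain, hL2π, hDconst, hD0]
    have hLHS : (∫ x in (0:ℝ)..(2 * Real.pi), g (γ x) * γ' x)
        = (∫ x in (0:ℝ)..(2 * Real.pi), h₀ (γ x) * γ' x)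
          + ∫ x in (0:ℝ)..(2 * Real.pi), c * (γ' x / γ x) := by
      have hint_b : IntervalIntegrable (fun x : ℝ => h₀ (γ x) * γ' x)
          MeasureTheory.volume 0 (2 * Real.pi) :=
        ((hh₀c.comp_continuous hγc hγmem).mul hγ'c).intervalIntegrable _ _
      have hint_c : IntervalIntegrable (fun x : ℝ => c * (γ' x / γ x))
          MeasureTheory.volume 0 (2 * Real.pi) :=
        (continuous_const.mul hqc).intervalIntegrable _ _
      rw [← intervalIntegral.integral_add hint_b hint_c]
      apply intervalIntegral.integral_congr
      intro x _
      simp only [hh₀def]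
      field_simp [hfne x]
      ring
    rw [hLHS, hmain0, zero_add, intervalIntegral.integral_const_mul, hwind', hRHS]
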